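/- Let r, n : ℤ² → ℝ³ with det(n(m,n), n(m+1,n), n(m,n+1)) ≠ 0 for all (m,n), and let a, b, s : ℤ² → ℝ satisfy the discrete Lelieuvre relations Δ_n r(m,n) = n(m,n) × ( a(m−1,n)·n(m−1,n) + s(m−1,n)·n(m−1,n+1) ) and Δ_m r(m,n) = −n(m,n) × ( b(m,n−1)·n(m,n−1) + s(m,n−1)·n(m+1,n−1) ) for all (m,n). Then there exists f : ℤ² → ℝ such that the self-adjoint 7-point scheme holds for the co-normal field: a(m,n)·n(m+1,n) + a(m−1,n)·n(m−1,n) + b(m,n)·n(m,n+1) + b(m,n−1)·n(m,n−1) + s(m−1,n)·n(m−1,n+1) + s(m,n−1)·n(m+1,n−1) = f(m,n)·n(m,n) for all (m,n). -/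

import Mathlib

open Matrix

/-- Determinant of the 3×3 matrix with rows `u`, `v`, `w`. -/
noncomputable def det3 (u v w : Fin 3 → ℝ) : ℝ :=
  (Matrix.of ![u, v, w]).det

lemma vec3_eq_zero {x y z : ℝ} (hx : x = 0) (hy : y = 0) (hz : z = 0) :
    ![x, y, z] = (0 : Fin 3 → ℝ) := by
  funext i; fin_cases i <;> simp_all

lemma cross_zero_parallel (u v : Fin 3 → ℝ) (hu : u ≠ 0) (h : u ⨯₃ v = 0) :
    ∃ c : ℝ, v = c • u := by
  have h0 := congrFun h 0
  have h1 := congrFun h 1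
  have h2 := congrFun h 2
  simp [cross_apply] at h0 h1 h2
  have hex : ∃ i, u i ≠ 0 := by
    by_contra hc
    push_neg at hc
    exact hu (funext hc)
  obtain ⟨i, hi⟩ := hex
  fin_cases i
  · have hi' : u 0 ≠ 0 := hi
    refine ⟨v 0 / u 0, funext fun j => ?_⟩
    fin_cases j
    · show v 0 = v 0 / u 0 * u 0; field_simp
    · show v 1 = v 0 / u 0 * u 1; field_simp; linear_combination h2
    · show v 2 = v 0 / u 0 * u 2; field_simp; linear_combination -h1
  · have hi' : u 1 ≠ 0 := hi
    refine ⟨v 1 / u 1, funext fun j => ?_⟩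
    fin_cases j
    · show v 0 = v 1 / u 1 * u 0; field_simp; linear_combination -h2
    · show v 1 = v 1 / u 1 * u 1; field_simp
    · show v 2 = v 1 / u 1 * u 2; field_simp; linear_combination h0
  · have hi' : u 2 ≠ 0 := hi
    refine ⟨v 2 / u 2, funext fun j => ?_⟩
    fin_cases j
    · show v 0 = v 2 / u 2 * u 0; field_simp; linear_combination h1
    · show v 1 = v 2 / u 2 * u 1; field_simp; linear_combination -h0
    · show v 2 = v 2 / u 2 * u 2; field_simp

/-- If the discrete Lelieuvre relations hold (with nondegeneracy
`det(n(m,k), n(m+1,k), n(m,k+1)) ≠ 0`), then the co-normal field `n` satisfies the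
self-adjoint 7-point scheme for some `f`. -/
theorem lelieuvre_implies_7point
    (r n : ℤ → ℤ → (Fin 3 → ℝ)) (a b s : ℤ → ℤ → ℝ)
    (hV : ∀ m k : ℤ, det3 (n m k) (n (m + 1) k) (n m (k + 1)) ≠ 0)
    (hLel : ∀ m k : ℤ,
      r m (k + 1) - r m k
        = n m k ⨯₃ (a (m - 1) k • n (m - 1) k + s (m - 1) k • n (m - 1) (k + 1)) ∧
      r (m + 1) k - r m k
        = -(n m k ⨯₃ (b m (k - 1) • n m (k - 1) + s m (k - 1) • n (m + 1) (k - 1)))) :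
    ∃ f : ℤ → ℤ → ℝ, ∀ m k : ℤ,
      a m k • n (m + 1) k + a (m - 1) k • n (m - 1) k
        + b m k • n m (k + 1) + b m (k - 1) • n m (k - 1)
        + s (m - 1) k • n (m - 1) (k + 1) + s m (k - 1) • n (m + 1) (k - 1)
      = f m k • n m k := by
  have key : ∀ m k : ℤ, ∃ c : ℝ,
      a m k • n (m + 1) k + a (m - 1) k • n (m - 1) k
        + b m k • n m (k + 1) + b m (k - 1) • n m (k - 1)
        + s (m - 1) k • n (m - 1) (k + 1) + s m (k - 1) • n (m + 1) (k - 1)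
      = c • n m k := by
    intro m k
    have hn0 : n m k ≠ 0 := by
      intro hz
      apply hV m k
      simp [det3, Matrix.det_fin_three, hz]
    apply cross_zero_parallel _ _ hn0
    have h1 := (hLel m k).1
    have h2 := (hLel m k).2
    have h3 := (hLel (m + 1) k).1
    have h4 := (hLel m (k + 1)).2
    simp only [add_sub_cancel_right] at h3 h4
    have hsum : (r (m+1) (k+1) - r (m+1) k) + (r (m+1) k - r m k)
        - (r m (k+1) - r m k) - (r (m+1) (k+1) - r m (k+1)) = 0 := by abel
    rw [h1, h2, h3, h4] at hsum
    have e0 := congrFun hsum 0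
    have e1 := congrFun hsum 1
    have e2 := congrFun hsum 2
    simp only [cross_apply, Pi.add_apply, Pi.sub_apply, Pi.neg_apply, Pi.smul_apply,
      Pi.zero_apply, smul_eq_mul, Matrix.cons_val_zero, Matrix.cons_val_one,
      Matrix.head_cons, Matrix.cons_val_two, Matrix.tail_cons] at e0 e1 e2
    rw [cross_apply]
    simp only [Pi.add_apply, Pi.smul_apply, smul_eq_mul]
    refine vec3_eq_zero ?_ ?_ ?_
    · linear_combination -e0
    · linear_combination -e1
    · linear_combination -e2
  choose f hf using key
  exact ⟨f, hf⟩
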